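/- Let γ be a finite-rank orthogonal projection on L²(ℝ³) whose range is spanned by functions in H²(ℝ³). Then for every h ∈ L⁶(ℝ³), the operator γ ∘ M_h (M_h = multiplication by h) is Hilbert-Schmidt, and there exists a constant K (depending only on γ) such that ‖γ M_h‖_{𝔖₂} ≤ K ‖h‖_{L⁶} for all h ∈ L⁶(ℝ³). -/

import Mathlib

/-!
STATEMENT 19: Let γ be a finite-rank orthogonal projection on L²(ℝ³) whose
range is spanned by functions in H²(ℝ³).  Then for every h ∈ L⁶(ℝ³) the
operator γ M_h is Hilbert–Schmidt, and ‖γ M_h‖_{𝔖₂} ≤ K ‖h‖_{L⁶} for a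
constant K depending only on γ.

Formalization: γ = Σ_k |φ_k⟩⟨φ_k| with (φ_k) an orthonormal family; membership
of the φ_k in H²(ℝ³) is used only through the Sobolev embedding
H²(ℝ³) ↪ L²(ℝ³) ∩ L^∞(ℝ³), which is how it is encoded here.  γ M_h is the
integral operator with kernel Σ_k φ_k(r) conj(φ_k(r')) h(r'), and its
Hilbert–Schmidt norm is the L² norm of this kernel on the product space.
-/

open MeasureTheory ENNReal

lemma aux_third : (1:ℝ≥0∞)/2 = 1/3 + 1/6 := by
  have h : ∀ x : ℝ, 0 < x → ((ENNReal.ofReal x)⁻¹ = ENNReal.ofReal x⁻¹) :=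
    fun x hx => (ENNReal.ofReal_inv_of_pos hx).symm
  have e3 : (3:ℝ≥0∞) = ENNReal.ofReal 3 := by norm_num
  have e6 : (6:ℝ≥0∞) = ENNReal.ofReal 6 := by norm_num
  have e2 : (2:ℝ≥0∞) = ENNReal.ofReal 2 := by norm_num
  rw [one_div, one_div, one_div, e2, e3, e6, h 2 (by norm_num), h 3 (by norm_num),
    h 6 (by norm_num), ← ENNReal.ofReal_add (by norm_num) (by norm_num)]
  norm_num
lemma aux_memL3 {f : (Fin 3 → ℝ) → ℂ} (h2 : MemLp f 2 volume) (hi : MemLp f ⊤ volume) :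
    MemLp f 3 volume := by
  refine ⟨h2.1, ?_⟩
  rw [eLpNorm_eq_lintegral_rpow_enorm_toReal (by norm_num) (by norm_num)]
  refine ENNReal.rpow_lt_top_of_nonneg (by norm_num) (ne_of_lt ?_)
  have hC : eLpNormEssSup f volume < ⊤ := by
    have := hi.2; rwa [eLpNorm_exponent_top] at this
  have h2fin : (∫⁻ x, (‖f x‖₊ : ℝ≥0∞) ^ ((2:ℝ≥0∞).toReal) ∂volume) < ⊤ :=
    lintegral_rpow_enorm_lt_top_of_eLpNorm_lt_top (by norm_num) (by norm_num) h2.2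
  have hb : ∀ᵐ x ∂(volume : Measure (Fin 3 → ℝ)),
      (‖f x‖₊ : ℝ≥0∞) ^ ((3:ℝ≥0∞).toReal)
        ≤ eLpNormEssSup f volume * (‖f x‖₊ : ℝ≥0∞) ^ ((2:ℝ≥0∞).toReal) := by
    filter_upwards [ae_le_eLpNormEssSup (f := f) (μ := volume)] with x hx
    have h3 : ((3:ℝ≥0∞).toReal) = (1:ℝ) + (2:ℝ≥0∞).toReal := by norm_num
    rw [h3, ENNReal.rpow_add_of_nonneg _ _ (by norm_num) (by norm_num), ENNReal.rpow_one]
    exact mul_le_mul_left (by exact_mod_cast hx) _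
  calc (∫⁻ x, (‖f x‖₊ : ℝ≥0∞) ^ ((3:ℝ≥0∞).toReal) ∂volume)
      ≤ ∫⁻ x, eLpNormEssSup f volume * (‖f x‖₊ : ℝ≥0∞) ^ ((2:ℝ≥0∞).toReal) ∂volume :=
        lintegral_mono_ae hb
    _ = eLpNormEssSup f volume * ∫⁻ x, (‖f x‖₊ : ℝ≥0∞) ^ ((2:ℝ≥0∞).toReal) ∂volume :=
        lintegral_const_mul' _ _ hC.ne
    _ < ⊤ := ENNReal.mul_lt_top hC h2fin

lemma aux_tensor_eLpNorm {f g : (Fin 3 → ℝ) → ℂ}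
    (hf : AEStronglyMeasurable f volume) (hg : AEStronglyMeasurable g volume) :
    eLpNorm (fun p : (Fin 3 → ℝ) × (Fin 3 → ℝ) => f p.1 * g p.2) 2 (volume.prod volume)
      = eLpNorm f 2 volume * eLpNorm g 2 volume := by
  rw [eLpNorm_eq_lintegral_rpow_enorm_toReal (by norm_num) (by norm_num),
    eLpNorm_eq_lintegral_rpow_enorm_toReal (by norm_num) (by norm_num),
    eLpNorm_eq_lintegral_rpow_enorm_toReal (by norm_num) (by norm_num)]
  have h1 : (∫⁻ p : (Fin 3 → ℝ) × (Fin 3 → ℝ),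
      ‖f p.1 * g p.2‖ₑ ^ ((2:ℝ≥0∞).toReal) ∂(volume.prod volume))
      = (∫⁻ x, ‖f x‖ₑ ^ ((2:ℝ≥0∞).toReal) ∂volume)
        * ∫⁻ y, ‖g y‖ₑ ^ ((2:ℝ≥0∞).toReal) ∂volume := by
    rw [← lintegral_prod_mul (hf.enorm.pow_const _) (hg.enorm.pow_const _)]
    refine lintegral_congr fun p => ?_
    rw [enorm_mul, ENNReal.mul_rpow_of_nonneg _ _ (by norm_num)]
  rw [h1, ENNReal.mul_rpow_of_nonneg _ _ (by norm_num)]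

lemma aux_tensor_mem {f g : (Fin 3 → ℝ) → ℂ}
    (hf : MemLp f 2 volume) (hg : MemLp g 2 volume) :
    MemLp (fun p : (Fin 3 → ℝ) × (Fin 3 → ℝ) => f p.1 * g p.2) 2 (volume.prod volume) :=
  ⟨(hf.1.comp_fst).mul (hg.1.comp_snd), by
    rw [aux_tensor_eLpNorm hf.1 hg.1]; exact ENNReal.mul_lt_top hf.2 hg.2⟩


theorem stmt19 (m : ℕ) (φ : Fin m → (Fin 3 → ℝ) → ℂ)
    (hON : ∀ i j : Fin m,
      (∫ r : Fin 3 → ℝ, starRingEnd ℂ (φ i r) * φ j r) = if i = j then 1 else 0)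
    (hL2 : ∀ i, MemLp (φ i) 2 volume)
    (hLinf : ∀ i, MemLp (φ i) ⊤ volume) :
    ∃ K : ℝ, 0 ≤ K ∧
      ∀ h : (Fin 3 → ℝ) → ℂ, MemLp h 6 volume →
        MemLp (fun p : (Fin 3 → ℝ) × (Fin 3 → ℝ) =>
            (∑ k : Fin m, φ k p.1 * starRingEnd ℂ (φ k p.2)) * h p.2) 2
          (volume.prod volume) ∧
        (eLpNorm (fun p : (Fin 3 → ℝ) × (Fin 3 → ℝ) =>
            (∑ k : Fin m, φ k p.1 * starRingEnd ℂ (φ k p.2)) * h p.2) 2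
          (volume.prod volume)).toReal ≤ K * (eLpNorm h 6 volume).toReal := by
  classical
  set ψ : Fin m → (Fin 3 → ℝ) → ℂ := fun k r => starRingEnd ℂ (φ k r) with hψ
  have hψmeas : ∀ k, AEStronglyMeasurable (ψ k) volume := fun k =>
    (Complex.continuous_conj.comp_aestronglyMeasurable (hL2 k).1)
  have hψnorm : ∀ k, ∀ x, ‖ψ k x‖ = ‖φ k x‖ := fun k x => RCLike.norm_conj _
  have hψ3 : ∀ k, MemLp (ψ k) 3 volume := by
    intro k
    have h3 := aux_memL3 (hL2 k) (hLinf k)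
    refine ⟨hψmeas k, ?_⟩
    rw [eLpNorm_congr_norm_ae (Filter.Eventually.of_forall fun x => hψnorm k x)]
    exact h3.2
  have hψ3eq : ∀ k, eLpNorm (ψ k) 3 volume = eLpNorm (φ k) 3 volume := fun k =>
    eLpNorm_congr_norm_ae (Filter.Eventually.of_forall fun x => hψnorm k x)
  refine ⟨∑ k : Fin m, (eLpNorm (φ k) 2 volume).toReal * (eLpNorm (φ k) 3 volume).toReal,
    Finset.sum_nonneg fun k _ => mul_nonneg ENNReal.toReal_nonneg ENNReal.toReal_nonneg, ?_⟩
  intro h hh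
  -- the functions g k = ψ k * h
  set g : Fin m → (Fin 3 → ℝ) → ℂ := fun k r => ψ k r * h r with hg
  have hg2 : ∀ k, MemLp (g k) 2 volume := by
    intro k
    have := hh.smul (hψ3 k) (hpqr := ⟨by have := aux_third; simp only [one_div] at this; exact this.symm⟩)
    simpa [hg, Pi.smul_apply, smul_eq_mul, Pi.mul_def] using this
  have hgbound : ∀ k, eLpNorm (g k) 2 volume
      ≤ eLpNorm (ψ k) 3 volume * eLpNorm h 6 volume := by
    intro k
    have := eLpNorm_smul_le_mul_eLpNorm (f := h) (φ := ψ k) hh.1 (hψmeas k) (hpqr := ⟨by have := aux_third; simp only [one_div] at this; exact this.symm⟩)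
    simpa [hg, Pi.smul_apply, smul_eq_mul, Pi.mul_def] using this
  -- rewrite kernel as a sum of tensor products
  have hker : (fun p : (Fin 3 → ℝ) × (Fin 3 → ℝ) =>
      (∑ k : Fin m, φ k p.1 * starRingEnd ℂ (φ k p.2)) * h p.2)
      = fun p : (Fin 3 → ℝ) × (Fin 3 → ℝ) => ∑ k : Fin m, φ k p.1 * g k p.2 := by
    funext p
    rw [Finset.sum_mul]
    exact Finset.sum_congr rfl fun k _ => by rw [hg]; ring
  rw [hker]
  have hterm : ∀ k : Fin m, MemLp
      (fun p : (Fin 3 → ℝ) × (Fin 3 → ℝ) => φ k p.1 * g k p.2) 2 (volume.prod volume) :=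
    fun k => aux_tensor_mem (hL2 k) (hg2 k)
  constructor
  · exact memLp_finset_sum Finset.univ fun k _ => hterm k
  · have hsum : eLpNorm (fun p : (Fin 3 → ℝ) × (Fin 3 → ℝ) => ∑ k : Fin m, φ k p.1 * g k p.2)
        2 (volume.prod volume)
        ≤ ∑ k : Fin m, eLpNorm (fun p : (Fin 3 → ℝ) × (Fin 3 → ℝ) => φ k p.1 * g k p.2)
            2 (volume.prod volume) := by
      have := eLpNorm_sum_le (μ := volume.prod volume) (p := 2)
        (f := fun k (p : (Fin 3 → ℝ) × (Fin 3 → ℝ)) => φ k p.1 * g k p.2)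
        (s := Finset.univ) (fun k _ => (hterm k).1) (by norm_num)
      refine le_trans (le_of_eq ?_) this
      congr 1
      funext p
      simp
    have hle : eLpNorm (fun p : (Fin 3 → ℝ) × (Fin 3 → ℝ) => ∑ k : Fin m, φ k p.1 * g k p.2)
        2 (volume.prod volume)
        ≤ ∑ k : Fin m, eLpNorm (φ k) 2 volume * (eLpNorm (φ k) 3 volume * eLpNorm h 6 volume) := by
      refine hsum.trans (Finset.sum_le_sum fun k _ => ?_)
      rw [aux_tensor_eLpNorm (hL2 k).1 (hg2 k).1]
      exact mul_le_mul_right ((hgbound k).trans (by rw [hψ3eq k])) _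
    have hfin : (∑ k : Fin m, eLpNorm (φ k) 2 volume * (eLpNorm (φ k) 3 volume * eLpNorm h 6 volume)) ≠ ⊤ := by
      refine (ENNReal.sum_lt_top.mpr fun k _ => ?_).ne
      exact ENNReal.mul_lt_top (hL2 k).2
        (ENNReal.mul_lt_top (aux_memL3 (hL2 k) (hLinf k)).2 hh.2)
    calc (eLpNorm (fun p : (Fin 3 → ℝ) × (Fin 3 → ℝ) => ∑ k : Fin m, φ k p.1 * g k p.2)
            2 (volume.prod volume)).toReal
        ≤ (∑ k : Fin m, eLpNorm (φ k) 2 volume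
            * (eLpNorm (φ k) 3 volume * eLpNorm h 6 volume)).toReal :=
          ENNReal.toReal_mono hfin hle
      _ = ∑ k : Fin m, (eLpNorm (φ k) 2 volume).toReal
            * ((eLpNorm (φ k) 3 volume).toReal * (eLpNorm h 6 volume).toReal) := by
          rw [ENNReal.toReal_sum (fun k _ => (ENNReal.mul_lt_top (hL2 k).2
            (ENNReal.mul_lt_top (aux_memL3 (hL2 k) (hLinf k)).2 hh.2)).ne)]
          exact Finset.sum_congr rfl fun k _ => by
            rw [ENNReal.toReal_mul, ENNReal.toReal_mul]
      _ = (∑ k : Fin m, (eLpNorm (φ k) 2 volume).toReal * (eLpNorm (φ k) 3 volume).toReal)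
            * (eLpNorm h 6 volume).toReal := by
          rw [Finset.sum_mul]
          exact Finset.sum_congr rfl fun k _ => by ring
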